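/- Let G be a group, let M, L ⊆ G be finite subsets with e ∈ M ⊆ L, let F ⊆ G be a nonempty finite subset, and let C ⊆ G be an L-separated subset. Then |F ∩ MC| / |F| ≤ |M|/|L| + |M| · |∂_L F| / |F| + |M| · |M⁻¹F \ F| / |F|. -/
import Mathlib


open Pointwise

/-- The `K`-boundary of a finite subset `F` of a group: `∂_K F = {f ∈ F : Kf ⊄ F}`. -/
def Finset.groupBoundary {G : Type*} [Group G] [DecidableEq G] (K F : Finset G) : Finset G :=
  F.filter fun f => ¬ ∀ k ∈ K, k * f ∈ F

/-- A subset `C ⊆ G` is `L`-separated if the translates `Lc`, `c ∈ C`, are pairwise disjoint. -/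
def LSeparated {G : Type*} [Group G] (L : Finset G) (C : Set G) : Prop :=
  ∀ c₁ ∈ C, ∀ c₂ ∈ C, c₁ ≠ c₂ → ((L : Set G) * {c₁}) ∩ ((L : Set G) * {c₂}) = ∅

/-- Let `M, L ⊆ G` be finite with `e ∈ M ⊆ L`, `F` a nonempty finite subset,
and `C` an `L`-separated subset. Then
`|F ∩ MC|/|F| ≤ |M|/|L| + |M|·|∂_L F|/|F| + |M|·|M⁻¹F \ F|/|F|`. -/
theorem density_inter_translates_le {G : Type*} [Group G] [DecidableEq G]
    (M L : Finset G) (hM : (1 : G) ∈ M) (hML : M ⊆ L)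
    (F : Finset G) (hF : F.Nonempty) (C : Set G) (hC : LSeparated L C) :
    (((F : Set G) ∩ ((M : Set G) * C)).ncard : ℝ) / F.card ≤
      (M.card : ℝ) / L.card
        + (M.card : ℝ) * ((Finset.groupBoundary L F).card : ℝ) / F.card
        + (M.card : ℝ) * (((M⁻¹ * F) \ F).card : ℝ) / F.card := by
    classical
  have hLpos : 0 < L.card := Finset.card_pos.mpr ⟨1, hML hM⟩
  have hFpos : 0 < F.card := Finset.card_pos.mpr hF
  -- the relevant finite part of C
  have hsub : {c ∈ C | ∃ m ∈ M, m * c ∈ F} ⊆ (↑(M⁻¹ * F) : Set G) := by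
    rintro c ⟨_, m, hm, hmc⟩
    have : m⁻¹ * (m * c) ∈ (M⁻¹ * F : Finset G) :=
      Finset.mul_mem_mul (Finset.inv_mem_inv hm) hmc
    have h2 : c ∈ M⁻¹ * F := by simpa using this
    exact h2
  have hfin : {c ∈ C | ∃ m ∈ M, m * c ∈ F}.Finite :=
    Set.Finite.subset (M⁻¹ * F).finite_toSet hsub
  set D := hfin.toFinset with hD
  have hDmem : ∀ c, c ∈ D ↔ c ∈ C ∧ ∃ m ∈ M, m * c ∈ F := by
    intro c; simp [hD, Set.Finite.mem_toFinset]
  -- claim 1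
  have hScard : ((F : Set G) ∩ ((M : Set G) * C)).ncard ≤ M.card * D.card := by
    have h1 : (F : Set G) ∩ ((M : Set G) * C) ⊆ ↑(M * D) := by
      rintro x ⟨hxF, m, hm, c, hc, rfl⟩
      have hcD : c ∈ D := (hDmem c).mpr ⟨hc, m, hm, hxF⟩
      exact_mod_cast Finset.mul_mem_mul hm hcD
    calc ((F : Set G) ∩ ((M : Set G) * C)).ncard
        ≤ (↑(M * D) : Set G).ncard := Set.ncard_le_ncard h1 (Finset.finite_toSet _)
      _ = (M * D).card := Set.ncard_coe_finset _
      _ ≤ M.card * D.card := Finset.card_mul_le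
  set D₁ := D.filter (fun c => ∀ k ∈ L, k * c ∈ F) with hD₁
  set D₂ := D.filter (fun c => ¬ ∀ k ∈ L, k * c ∈ F) with hD₂
  -- claim 2
  have hLD1 : L.card * D₁.card ≤ F.card := by
    have hdisj : ∀ c₁ ∈ D₁, ∀ c₂ ∈ D₁, c₁ ≠ c₂ →
        Disjoint (L.image (· * c₁)) (L.image (· * c₂)) := by
      intro c₁ hc₁ c₂ hc₂ hne
      have h₁ : c₁ ∈ C := ((hDmem c₁).mp (Finset.mem_filter.mp hc₁).1).1
      have h₂ : c₂ ∈ C := ((hDmem c₂).mp (Finset.mem_filter.mp hc₂).1).1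
      have := hC c₁ h₁ c₂ h₂ hne
      rw [← Finset.disjoint_coe]
      rw [Set.disjoint_iff_inter_eq_empty]
      simpa [Finset.coe_image, Set.mul_singleton] using this
    have hunion : D₁.biUnion (fun c => L.image (· * c)) ⊆ F := by
      intro x hx
      rcases Finset.mem_biUnion.mp hx with ⟨c, hc, hx⟩
      rcases Finset.mem_image.mp hx with ⟨k, hk, rfl⟩
      exact (Finset.mem_filter.mp hc).2 k hk
    have hcard : (D₁.biUnion (fun c => L.image (· * c))).card = D₁.card * L.card := by
      rw [Finset.card_biUnion hdisj]
      have hc : ∀ c ∈ D₁, (L.image (· * c)).card = L.card :=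
        fun c _ => Finset.card_image_of_injective _ (mul_left_injective c)
      rw [Finset.sum_congr rfl hc, Finset.sum_const, smul_eq_mul]
    calc L.card * D₁.card = D₁.card * L.card := Nat.mul_comm _ _
      _ = (D₁.biUnion (fun c => L.image (· * c))).card := hcard.symm
      _ ≤ F.card := Finset.card_le_card hunion
  -- claim 3
  have hD2 : D₂.card ≤ (Finset.groupBoundary L F).card + ((M⁻¹ * F) \ F).card := by
    have hsub2 : D₂ ⊆ (Finset.groupBoundary L F) ∪ ((M⁻¹ * F) \ F) := by
      intro c hc
      obtain ⟨hcD, hnall⟩ := Finset.mem_filter.mp hc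
      obtain ⟨hcC, m, hm, hmc⟩ := (hDmem c).mp hcD
      have hcMF : c ∈ M⁻¹ * F := by
        have : m⁻¹ * (m * c) ∈ M⁻¹ * F :=
          Finset.mul_mem_mul (Finset.inv_mem_inv hm) hmc
        simpa using this
      by_cases hcF : c ∈ F
      · exact Finset.mem_union_left _ (Finset.mem_filter.mpr ⟨hcF, hnall⟩)
      · exact Finset.mem_union_right _ (Finset.mem_sdiff.mpr ⟨hcMF, hcF⟩)
    exact le_trans (Finset.card_le_card hsub2) (Finset.card_union_le _ _)
  have hDsplit : D₁.card + D₂.card = D.card :=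
    Finset.card_filter_add_card_filter_not _
  -- combine over ℕ
  have keyN : ((F : Set G) ∩ ((M : Set G) * C)).ncard * L.card ≤
      M.card * F.card +
        (M.card * (Finset.groupBoundary L F).card + M.card * ((M⁻¹ * F) \ F).card) * L.card := by
    calc ((F : Set G) ∩ ((M : Set G) * C)).ncard * L.card
        ≤ (M.card * D.card) * L.card := Nat.mul_le_mul_right _ hScard
      _ = M.card * D₁.card * L.card + M.card * D₂.card * L.card := by
          rw [← hDsplit]; ring
      _ ≤ M.card * F.card +
            (M.card * (Finset.groupBoundary L F).card + M.card * ((M⁻¹ * F) \ F).card) * L.card := by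
          refine Nat.add_le_add ?_ (Nat.mul_le_mul_right _ ?_)
          · calc M.card * D₁.card * L.card = M.card * (L.card * D₁.card) := by ring
              _ ≤ M.card * F.card := Nat.mul_le_mul_left _ hLD1
          · calc M.card * D₂.card
                ≤ M.card * ((Finset.groupBoundary L F).card + ((M⁻¹ * F) \ F).card) :=
                  Nat.mul_le_mul_left _ hD2
              _ = _ := Nat.mul_add _ _ _
  -- pass to ℝ
  have hf0 : (0 : ℝ) < F.card := by exact_mod_cast hFpos
  have hl0 : (0 : ℝ) < L.card := by exact_mod_cast hLpos
  have key : (((F : Set G) ∩ ((M : Set G) * C)).ncard : ℝ) * L.card ≤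
      M.card * F.card +
        (M.card * (Finset.groupBoundary L F).card + M.card * ((M⁻¹ * F) \ F).card) * L.card := by
    exact_mod_cast keyN
  rw [div_le_iff₀ hf0]
  have heq : ((M.card : ℝ) / L.card
        + (M.card : ℝ) * ((Finset.groupBoundary L F).card : ℝ) / F.card
        + (M.card : ℝ) * (((M⁻¹ * F) \ F).card : ℝ) / F.card) * F.card =
      ((M.card : ℝ) * F.card +
        ((M.card : ℝ) * (Finset.groupBoundary L F).card +
          (M.card : ℝ) * ((M⁻¹ * F) \ F).card) * L.card) / L.card := by
    field_simp
    ring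
  rw [heq, le_div_iff₀ hl0]
  exact key
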